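/- The minimum diameter of a plane integral point set of 5 points is 7. -/

import Mathlib

set_option maxRecDepth 1000000
set_option maxHeartbeats 4000000


noncomputable def pt (x y : ℝ) : EuclideanSpace ℝ (Fin 2) := !₂[x, y]

lemma dist_pt (x1 y1 x2 y2 : ℝ) :
    dist (pt x1 y1) (pt x2 y2) = Real.sqrt ((x1-x2)^2 + (y1-y2)^2) := by
  rw [EuclideanSpace.dist_eq]
  congr 1
  simp [Fin.sum_univ_two, pt, Real.dist_eq, sq_abs]

lemma dist_pt_nat (x1 y1 x2 y2 : ℝ) (m : ℕ) (h : (x1-x2)^2 + (y1-y2)^2 = (m:ℝ)^2) :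
    dist (pt x1 y1) (pt x2 y2) = m := by
  rw [dist_pt, h, Real.sqrt_sq (by positivity)]

lemma pt_ne (x1 y1 x2 y2 : ℝ) (h : x1 ≠ x2) : pt x1 y1 ≠ pt x2 y2 := by
  intro h'
  exact h (congrArg (fun p => p 0) h')

noncomputable def PA : EuclideanSpace ℝ (Fin 2) := pt (0:ℝ) (0:ℝ)
noncomputable def PB : EuclideanSpace ℝ (Fin 2) := pt (3:ℝ) (0:ℝ)
noncomputable def PC : EuclideanSpace ℝ (Fin 2) := pt (4:ℝ) (0:ℝ)
noncomputable def PD : EuclideanSpace ℝ (Fin 2) := pt (7:ℝ) (0:ℝ)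
noncomputable def PE : EuclideanSpace ℝ (Fin 2) := pt (7/2:ℝ) (Real.sqrt 15/2)

theorem part1 : (∃ S : Finset (EuclideanSpace ℝ (Fin 2)), S.card = 5 ∧
      (∀ p ∈ S, ∀ q ∈ S, ∃ m : ℕ, dist p q = m) ∧
      ¬ Collinear ℝ (S : Set (EuclideanSpace ℝ (Fin 2))) ∧
      (∀ p ∈ S, ∀ q ∈ S, dist p q ≤ 7) ∧
      (∃ p ∈ S, ∃ q ∈ S, dist p q = 7)) := by
  classical
  have h15 : Real.sqrt 15 ^ 2 = 15 := Real.sq_sqrt (by norm_num)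
  refine ⟨{PA, PB, PC, PD, PE}, ?_, ?_, ?_, ?_, ?_⟩
  · rw [Finset.card_insert_of_notMem, Finset.card_insert_of_notMem,
      Finset.card_insert_of_notMem, Finset.card_insert_of_notMem, Finset.card_singleton]
    · simp only [Finset.mem_singleton]
      exact pt_ne _ _ _ _ (by norm_num)
    · simp only [Finset.mem_insert, Finset.mem_singleton]
      push_neg
      exact ⟨pt_ne _ _ _ _ (by norm_num), pt_ne _ _ _ _ (by norm_num)⟩
    · simp only [Finset.mem_insert, Finset.mem_singleton]
      push_neg
      exact ⟨pt_ne _ _ _ _ (by norm_num), pt_ne _ _ _ _ (by norm_num), pt_ne _ _ _ _ (by norm_num)⟩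
    · simp only [Finset.mem_insert, Finset.mem_singleton]
      push_neg
      exact ⟨pt_ne _ _ _ _ (by norm_num), pt_ne _ _ _ _ (by norm_num), pt_ne _ _ _ _ (by norm_num),
        pt_ne _ _ _ _ (by norm_num)⟩
  · intro p hp q hq
    simp only [Finset.mem_insert, Finset.mem_singleton] at hp hq
    unfold PA PB PC PD PE at hp hq
    rcases hp with rfl|rfl|rfl|rfl|rfl <;> rcases hq with rfl|rfl|rfl|rfl|rfl
    exacts [⟨0, dist_pt_nat _ _ _ _ 0 (by norm_num)⟩, ⟨3, dist_pt_nat _ _ _ _ 3 (by norm_num)⟩, ⟨4, dist_pt_nat _ _ _ _ 4 (by norm_num)⟩, ⟨7, dist_pt_nat _ _ _ _ 7 (by norm_num)⟩, ⟨4, dist_pt_nat _ _ _ _ 4 (by push_cast; nlinarith [Real.sq_sqrt (show (0:ℝ) ≤ 15 by norm_num)])⟩,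
      ⟨3, dist_pt_nat _ _ _ _ 3 (by norm_num)⟩, ⟨0, dist_pt_nat _ _ _ _ 0 (by norm_num)⟩, ⟨1, dist_pt_nat _ _ _ _ 1 (by norm_num)⟩, ⟨4, dist_pt_nat _ _ _ _ 4 (by norm_num)⟩, ⟨2, dist_pt_nat _ _ _ _ 2 (by push_cast; nlinarith [Real.sq_sqrt (show (0:ℝ) ≤ 15 by norm_num)])⟩,
      ⟨4, dist_pt_nat _ _ _ _ 4 (by norm_num)⟩, ⟨1, dist_pt_nat _ _ _ _ 1 (by norm_num)⟩, ⟨0, dist_pt_nat _ _ _ _ 0 (by norm_num)⟩, ⟨3, dist_pt_nat _ _ _ _ 3 (by norm_num)⟩, ⟨2, dist_pt_nat _ _ _ _ 2 (by push_cast; nlinarith [Real.sq_sqrt (show (0:ℝ) ≤ 15 by norm_num)])⟩,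
      ⟨7, dist_pt_nat _ _ _ _ 7 (by norm_num)⟩, ⟨4, dist_pt_nat _ _ _ _ 4 (by norm_num)⟩, ⟨3, dist_pt_nat _ _ _ _ 3 (by norm_num)⟩, ⟨0, dist_pt_nat _ _ _ _ 0 (by norm_num)⟩, ⟨4, dist_pt_nat _ _ _ _ 4 (by push_cast; nlinarith [Real.sq_sqrt (show (0:ℝ) ≤ 15 by norm_num)])⟩,
      ⟨4, dist_pt_nat _ _ _ _ 4 (by push_cast; nlinarith [Real.sq_sqrt (show (0:ℝ) ≤ 15 by norm_num)])⟩, ⟨2, dist_pt_nat _ _ _ _ 2 (by push_cast; nlinarith [Real.sq_sqrt (show (0:ℝ) ≤ 15 by norm_num)])⟩, ⟨2, dist_pt_nat _ _ _ _ 2 (by push_cast; nlinarith [Real.sq_sqrt (show (0:ℝ) ≤ 15 by norm_num)])⟩, ⟨4, dist_pt_nat _ _ _ _ 4 (by push_cast; nlinarith [Real.sq_sqrt (show (0:ℝ) ≤ 15 by norm_num)])⟩, ⟨0, dist_pt_nat _ _ _ _ 0 (by push_cast; nlinarith [Real.sq_sqrt (show (0:ℝ) ≤ 15 by norm_num)]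)⟩]
  · intro hcol
    have hA : PA ∈ (({PA, PB, PC, PD, PE} : Finset (EuclideanSpace ℝ (Fin 2))) : Set (EuclideanSpace ℝ (Fin 2))) := by simp
    obtain ⟨v, hv⟩ := (collinear_iff_of_mem hA).mp hcol
    obtain ⟨r1, h1⟩ := hv PD (by simp)
    obtain ⟨r2, h2⟩ := hv PE (by simp)
    have h10 : (7:ℝ) = r1 * v 0 + 0 := by
      have := congrArg (fun p => p 0) h1
      simpa [PD, PA, pt, vadd_eq_add] using this
    have h11 : (0:ℝ) = r1 * v 1 + 0 := by
      have := congrArg (fun p => p 1) h1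
      simpa [PD, PA, pt, vadd_eq_add] using this
    have h21 : (Real.sqrt 15/2 : ℝ) = r2 * v 1 + 0 := by
      have := congrArg (fun p => p 1) h2
      simpa [PE, PA, pt, vadd_eq_add] using this
    have hs : 0 < Real.sqrt 15 := Real.sqrt_pos.mpr (by norm_num)
    have hr1 : r1 ≠ 0 := by
      intro h; rw [h] at h10; norm_num at h10
    have hv1 : v 1 = 0 := by
      have h11' : r1 * v 1 = 0 := by linarith
      rcases mul_eq_zero.mp h11' with h | h
      · exact absurd h hr1
      · exact h
    rw [hv1, mul_zero] at h21
    nlinarith [h21, hs]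
  · intro p hp q hq
    simp only [Finset.mem_insert, Finset.mem_singleton] at hp hq
    unfold PA PB PC PD PE at hp hq
    rcases hp with rfl|rfl|rfl|rfl|rfl <;> rcases hq with rfl|rfl|rfl|rfl|rfl
    exacts [le_of_eq_of_le (dist_pt_nat _ _ _ _ 0 (by norm_num)) (by norm_num), le_of_eq_of_le (dist_pt_nat _ _ _ _ 3 (by norm_num)) (by norm_num), le_of_eq_of_le (dist_pt_nat _ _ _ _ 4 (by norm_num)) (by norm_num), le_of_eq_of_le (dist_pt_nat _ _ _ _ 7 (by norm_num)) (by norm_num), le_of_eq_of_le (dist_pt_nat _ _ _ _ 4 (by push_cast; nlinarith [Real.sq_sqrt (show (0:ℝ) ≤ 15 by norm_num)])) (by norm_num),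
      le_of_eq_of_le (dist_pt_nat _ _ _ _ 3 (by norm_num)) (by norm_num), le_of_eq_of_le (dist_pt_nat _ _ _ _ 0 (by norm_num)) (by norm_num), le_of_eq_of_le (dist_pt_nat _ _ _ _ 1 (by norm_num)) (by norm_num), le_of_eq_of_le (dist_pt_nat _ _ _ _ 4 (by norm_num)) (by norm_num), le_of_eq_of_le (dist_pt_nat _ _ _ _ 2 (by push_cast; nlinarith [Real.sq_sqrt (show (0:ℝ) ≤ 15 by norm_num)])) (by norm_num),
      le_of_eq_of_le (dist_pt_nat _ _ _ _ 4 (by norm_num)) (by norm_num), le_of_eq_of_le (dist_pt_nat _ _ _ _ 1 (by norm_num)) (by norm_num), le_of_eq_of_le (dist_pt_nat _ _ _ _ 0 (by norm_num)) (by norm_num), le_of_eq_of_le (dist_pt_nat _ _ _ _ 3 (by norm_num)) (by norm_num), le_of_eq_of_le (dist_pt_nat _ _ _ _ 2 (by push_cast; nlinarith [Real.sq_sqrt (show (0:ℝ) ≤ 15 by norm_num)])) (by norm_num),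
      le_of_eq_of_le (dist_pt_nat _ _ _ _ 7 (by norm_num)) (by norm_num), le_of_eq_of_le (dist_pt_nat _ _ _ _ 4 (by norm_num)) (by norm_num), le_of_eq_of_le (dist_pt_nat _ _ _ _ 3 (by norm_num)) (by norm_num), le_of_eq_of_le (dist_pt_nat _ _ _ _ 0 (by norm_num)) (by norm_num), le_of_eq_of_le (dist_pt_nat _ _ _ _ 4 (by push_cast; nlinarith [Real.sq_sqrt (show (0:ℝ) ≤ 15 by norm_num)])) (by norm_num),
      le_of_eq_of_le (dist_pt_nat _ _ _ _ 4 (by push_cast; nlinarith [Real.sq_sqrt (show (0:ℝ) ≤ 15 by norm_num)])) (by norm_num), le_of_eq_of_le (dist_pt_nat _ _ _ _ 2 (by push_cast; nlinarith [Real.sq_sqrt (show (0:ℝ) ≤ 15 by norm_num)])) (by norm_num), le_of_eq_of_le (dist_pt_nat _ _ _ _ 2 (by push_cast; nlinarith [Real.sq_sqrt (show (0:ℝ) ≤ 15 by norm_num)])) (by norm_num), le_of_eq_of_le (dist_pt_nat _ _ _ _ 4 (by push_cast; nlinarith [Real.sq_sqrt (show (0:ℝ) ≤ 15 by norm_num)]))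 (by norm_num), le_of_eq_of_le (dist_pt_nat _ _ _ _ 0 (by push_cast; nlinarith [Real.sq_sqrt (show (0:ℝ) ≤ 15 by norm_num)])) (by norm_num)]
  · refine ⟨PA, by simp, PD, by simp, ?_⟩
    have := dist_pt_nat (0:ℝ) (0:ℝ) (7:ℝ) (0:ℝ) 7 (by norm_num)
    unfold PA PD
    rw [this]; norm_num

abbrev E2 := EuclideanSpace ℝ (Fin 2)

def XI (d a b : ℕ) : ℤ := (a:ℤ)*a+(d:ℤ)*d-(b:ℤ)*b
def SI (d a b : ℕ) : ℤ := 4*(d:ℤ)*(d:ℤ)*(a:ℤ)*(a:ℤ) - XI d a b * XI d a b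
def AI (d a2 b2 a3 b3 c : ℕ) : ℤ :=
  SI d a2 b2 + SI d a3 b3 + (XI d a2 b2 - XI d a3 b3)*(XI d a2 b2 - XI d a3 b3) - 4*(d:ℤ)*(d:ℤ)*(c:ℤ)*(c:ℤ)

def P4 (d a2 b2 a3 b3 c23 a4 b4 c24 : ℕ) : Prop :=
  ∀ c34 : ℕ, c34 < 6 →
    2 * SI d a2 b2 *
      ((XI d a3 b3 - XI d a4 b4) * (XI d a3 b3 - XI d a4 b4)
        + SI d a3 b3 + SI d a4 b4 - 4*(d:ℤ)*(d:ℤ)*((c34+1 : ℕ):ℤ)*((c34+1 : ℕ):ℤ))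
      ≠ AI d a2 b2 a3 b3 c23 * AI d a2 b2 a4 b4 c24

instance (d a2 b2 a3 b3 c23 a4 b4 c24 : ℕ) : Decidable (P4 d a2 b2 a3 b3 c23 a4 b4 c24) := by
  unfold P4; infer_instance

def P3 (d a2 b2 a3 b3 c23 : ℕ) : Prop :=
  ∀ a4 : ℕ, a4 < 6 → ∀ b4 : ℕ, b4 < 6 →
    0 ≤ SI d (a4+1) (b4+1) →
  ∀ c24 : ℕ, c24 < 6 →
    AI d a2 b2 (a4+1) (b4+1) (c24+1) * AI d a2 b2 (a4+1) (b4+1) (c24+1)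
      = 4 * SI d a2 b2 * SI d (a4+1) (b4+1) →
  P4 d a2 b2 a3 b3 c23 (a4+1) (b4+1) (c24+1)

instance (d a2 b2 a3 b3 c23 : ℕ) : Decidable (P3 d a2 b2 a3 b3 c23) := by
  unfold P3; infer_instance

def P2 (d a2 b2 : ℕ) : Prop :=
  ∀ a3 : ℕ, a3 < 6 → ∀ b3 : ℕ, b3 < 6 →
    0 ≤ SI d (a3+1) (b3+1) →
  ∀ c23 : ℕ, c23 < 6 →
    AI d a2 b2 (a3+1) (b3+1) (c23+1) * AI d a2 b2 (a3+1) (b3+1) (c23+1)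
      = 4 * SI d a2 b2 * SI d (a3+1) (b3+1) →
  P3 d a2 b2 (a3+1) (b3+1) (c23+1)

instance (d a2 b2 : ℕ) : Decidable (P2 d a2 b2) := by
  unfold P2; infer_instance

def NoSol : Prop :=
  ∀ d : ℕ, d < 6 → ∀ a2 : ℕ, a2 < 6 → ∀ b2 : ℕ, b2 < 6 →
    0 < SI (d+1) (a2+1) (b2+1) → P2 (d+1) (a2+1) (b2+1)

set_option maxRecDepth 1000000 in
set_option maxHeartbeats 4000000 in
theorem nosol : NoSol := by unfold NoSol; decide

lemma nosol' (d a2 b2 a3 b3 a4 b4 c23 c24 c34 : ℕ)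
    (hd1 : 1 ≤ d) (hd6 : d ≤ 6)
    (ha21 : 1 ≤ a2) (ha26 : a2 ≤ 6) (hb21 : 1 ≤ b2) (hb26 : b2 ≤ 6)
    (ha31 : 1 ≤ a3) (ha36 : a3 ≤ 6) (hb31 : 1 ≤ b3) (hb36 : b3 ≤ 6)
    (ha41 : 1 ≤ a4) (ha46 : a4 ≤ 6) (hb41 : 1 ≤ b4) (hb46 : b4 ≤ 6)
    (hc231 : 1 ≤ c23) (hc236 : c23 ≤ 6) (hc241 : 1 ≤ c24) (hc246 : c24 ≤ 6)
    (hc341 : 1 ≤ c34) (hc346 : c34 ≤ 6)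
    (h2 : 0 < SI d a2 b2) (h3 : 0 ≤ SI d a3 b3) (h4 : 0 ≤ SI d a4 b4)
    (e3 : AI d a2 b2 a3 b3 c23 * AI d a2 b2 a3 b3 c23 = 4 * SI d a2 b2 * SI d a3 b3)
    (e4 : AI d a2 b2 a4 b4 c24 * AI d a2 b2 a4 b4 c24 = 4 * SI d a2 b2 * SI d a4 b4)
    (e34 : 2 * SI d a2 b2 *
      ((XI d a3 b3 - XI d a4 b4) * (XI d a3 b3 - XI d a4 b4)
        + SI d a3 b3 + SI d a4 b4 - 4*(d:ℤ)*(d:ℤ)*(c34:ℤ)*(c34:ℤ))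
      = AI d a2 b2 a3 b3 c23 * AI d a2 b2 a4 b4 c24) : False := by
  obtain ⟨d, rfl⟩ : ∃ k, d = k+1 := ⟨d-1, by omega⟩
  obtain ⟨a2, rfl⟩ : ∃ k, a2 = k+1 := ⟨a2-1, by omega⟩
  obtain ⟨b2, rfl⟩ : ∃ k, b2 = k+1 := ⟨b2-1, by omega⟩
  obtain ⟨a3, rfl⟩ : ∃ k, a3 = k+1 := ⟨a3-1, by omega⟩
  obtain ⟨b3, rfl⟩ : ∃ k, b3 = k+1 := ⟨b3-1, by omega⟩
  obtain ⟨a4, rfl⟩ : ∃ k, a4 = k+1 := ⟨a4-1, by omega⟩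
  obtain ⟨b4, rfl⟩ : ∃ k, b4 = k+1 := ⟨b4-1, by omega⟩
  obtain ⟨c23, rfl⟩ : ∃ k, c23 = k+1 := ⟨c23-1, by omega⟩
  obtain ⟨c24, rfl⟩ : ∃ k, c24 = k+1 := ⟨c24-1, by omega⟩
  obtain ⟨c34, rfl⟩ : ∃ k, c34 = k+1 := ⟨c34-1, by omega⟩
  exact nosol d (by omega) a2 (by omega) b2 (by omega) h2 a3 (by omega) b3 (by omega) h3
    c23 (by omega) e3 a4 (by omega) b4 (by omega) h4 c24 (by omega) e4 c34 (by omega) e34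


lemma dist_sq (p q : E2) : dist p q ^ 2 = (p 0 - q 0)^2 + (p 1 - q 1)^2 := by
  rw [EuclideanSpace.dist_eq, Real.sq_sqrt (by positivity)]
  simp [Fin.sum_univ_two, Real.dist_eq, sq_abs]

theorem part2 : ¬ (∃ S : Finset (EuclideanSpace ℝ (Fin 2)), S.card = 5 ∧
      (∀ p ∈ S, ∀ q ∈ S, ∃ m : ℕ, dist p q = m) ∧
      ¬ Collinear ℝ (S : Set (EuclideanSpace ℝ (Fin 2))) ∧
      (∀ p ∈ S, ∀ q ∈ S, dist p q ≤ 6)) := by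
  rintro ⟨S, hcard, hint, hncol, hle⟩
  classical
  have hget : ∀ p ∈ S, ∀ q ∈ S, p ≠ q → ∃ m : ℕ, dist p q = m ∧ 1 ≤ m ∧ m ≤ 6 := by
    intro p hp q hq hne
    obtain ⟨m, hm⟩ := hint p hp q hq
    refine ⟨m, hm, ?_, ?_⟩
    · rcases Nat.eq_zero_or_pos m with h | h
      · exfalso; apply hne; subst h; simpa using dist_eq_zero.mp (by simpa using hm)
      · exact h
    · have := hle p hp q hq
      rw [hm] at this
      exact_mod_cast this
  obtain ⟨p0, hp0, p1, hp1, hne01⟩ := Finset.one_lt_card.mp (by omega : 1 < S.card)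
  set D : ℝ := dist p0 p1 with hDdef
  have hDpos : 0 < D := dist_pos.mpr hne01
  set ux : ℝ := (p1 0 - p0 0) / D with hux
  set uy : ℝ := (p1 1 - p0 1) / D with huy
  have hW : (p1 0 - p0 0)^2 + (p1 1 - p0 1)^2 = D^2 := by
    rw [← dist_sq p1 p0]; rw [dist_comm]
  have hu : ux^2 + uy^2 = 1 := by
    rw [hux, huy]; field_simp; linear_combination hW
  set x : E2 → ℝ := fun p => (p 0 - p0 0) * ux + (p 1 - p0 1) * uy with hx
  set y : E2 → ℝ := fun p => -(p 0 - p0 0) * uy + (p 1 - p0 1) * ux with hy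
  have hdist : ∀ p q : E2, dist p q ^ 2 = (x p - x q)^2 + (y p - y q)^2 := by
    intro p q
    rw [dist_sq p q, hx, hy]
    simp only
    linear_combination (-((p 0 - q 0)^2) - (p 1 - q 1)^2) * hu
  have hxp0 : x p0 = 0 := by simp [hx]
  have hyp0 : y p0 = 0 := by simp [hy]
  have hxp1 : x p1 = D := by
    rw [hx]; simp only [hux, huy]; field_simp; linear_combination hW
  have hyp1 : y p1 = 0 := by
    rw [hy]; simp only [hux, huy]; field_simp; ring
  -- there is a point with y ≠ 0
  have hp2ex : ∃ p2 ∈ S, y p2 ≠ 0 := by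
    by_contra hall
    push_neg at hall
    apply hncol
    rw [collinear_iff_of_mem (show p0 ∈ (S : Set E2) from hp0)]
    refine ⟨(!₂[ux, uy] : E2), ?_⟩
    intro p hp
    refine ⟨x p, ?_⟩
    have hyp : y p = 0 := hall p hp
    have h1 : -(p 0 - p0 0) * uy + (p 1 - p0 1) * ux = 0 := hyp
    ext i
    fin_cases i
    · show p 0 = x p * ux + p0 0
      rw [hx]; simp only
      linear_combination (-(p 0 - p0 0)) * hu - uy * h1
    · show p 1 = x p * uy + p0 1
      rw [hx]; simp only
      linear_combination (-(p 1 - p0 1)) * hu + ux * h1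
  obtain ⟨p2, hp2, hy2⟩ := hp2ex
  have hne20 : p2 ≠ p0 := fun h => hy2 (by rw [h, hyp0])
  have hne21 : p2 ≠ p1 := fun h => hy2 (by rw [h, hyp1])
  have h1e : p1 ∈ S.erase p0 := Finset.mem_erase.mpr ⟨hne01.symm, hp1⟩
  have h2e : p2 ∈ (S.erase p0).erase p1 :=
    Finset.mem_erase.mpr ⟨hne21, Finset.mem_erase.mpr ⟨hne20, hp2⟩⟩
  have hT : (((S.erase p0).erase p1).erase p2).card = 2 := by
    rw [Finset.card_erase_of_mem h2e, Finset.card_erase_of_mem h1e,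
      Finset.card_erase_of_mem hp0, hcard]
  obtain ⟨p3, hp3T, p4, hp4T, hne34⟩ := Finset.one_lt_card.mp (by omega : 1 < (((S.erase p0).erase p1).erase p2).card)
  simp only [Finset.mem_erase] at hp3T hp4T
  obtain ⟨hne32, hne31, hne30, hp3⟩ := hp3T
  obtain ⟨hne42, hne41, hne40, hp4⟩ := hp4T
  -- natural number distances
  obtain ⟨n, hn, hn1, hn6⟩ := hget p0 hp0 p1 hp1 hne01
  obtain ⟨a2, ha2, ha21, ha26⟩ := hget p2 hp2 p0 hp0 hne20
  obtain ⟨b2, hb2, hb21, hb26⟩ := hget p2 hp2 p1 hp1 hne21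
  obtain ⟨a3, ha3, ha31, ha36⟩ := hget p3 hp3 p0 hp0 hne30
  obtain ⟨b3, hb3, hb31, hb36⟩ := hget p3 hp3 p1 hp1 hne31
  obtain ⟨a4, ha4, ha41, ha46⟩ := hget p4 hp4 p0 hp0 hne40
  obtain ⟨b4, hb4, hb41, hb46⟩ := hget p4 hp4 p1 hp1 hne41
  obtain ⟨c23, hc23, hc231, hc236⟩ := hget p2 hp2 p3 hp3 (Ne.symm hne32)
  obtain ⟨c24, hc24, hc241, hc246⟩ := hget p2 hp2 p4 hp4 (Ne.symm hne42)
  obtain ⟨c34, hc34, hc341, hc346⟩ := hget p3 hp3 p4 hp4 hne34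
  have hDn : D = (n:ℝ) := by rw [hDdef, hn]
  -- basic real relations
  have hax2 : (a2:ℝ)^2 = x p2 ^2 + y p2 ^2 := by
    have h := hdist p2 p0; rw [ha2, hxp0, hyp0] at h; simpa using h
  have hbx2 : (b2:ℝ)^2 = (x p2 - D)^2 + y p2 ^2 := by
    have h := hdist p2 p1; rw [hb2, hxp1, hyp1] at h; simpa using h
  have hax3 : (a3:ℝ)^2 = x p3 ^2 + y p3 ^2 := by
    have h := hdist p3 p0; rw [ha3, hxp0, hyp0] at h; simpa using h
  have hbx3 : (b3:ℝ)^2 = (x p3 - D)^2 + y p3 ^2 := by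
    have h := hdist p3 p1; rw [hb3, hxp1, hyp1] at h; simpa using h
  have hax4 : (a4:ℝ)^2 = x p4 ^2 + y p4 ^2 := by
    have h := hdist p4 p0; rw [ha4, hxp0, hyp0] at h; simpa using h
  have hbx4 : (b4:ℝ)^2 = (x p4 - D)^2 + y p4 ^2 := by
    have h := hdist p4 p1; rw [hb4, hxp1, hyp1] at h; simpa using h
  have hcx23 : (c23:ℝ)^2 = (x p2 - x p3)^2 + (y p2 - y p3)^2 := by
    have h := hdist p2 p3; rw [hc23] at h; exact h.symm ▸ h
  have hcx24 : (c24:ℝ)^2 = (x p2 - x p4)^2 + (y p2 - y p4)^2 := by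
    have h := hdist p2 p4; rw [hc24] at h; exact h
  have hcx34 : (c34:ℝ)^2 = (x p3 - x p4)^2 + (y p3 - y p4)^2 := by
    have h := hdist p3 p4; rw [hc34] at h; exact h
  -- cast identities
  have hXr2 : ((XI n a2 b2 : ℤ):ℝ) = 2*D*x p2 := by
    simp only [XI]; push_cast; rw [← hDn]; linear_combination hax2 - hbx2
  have hXr3 : ((XI n a3 b3 : ℤ):ℝ) = 2*D*x p3 := by
    simp only [XI]; push_cast; rw [← hDn]; linear_combination hax3 - hbx3
  have hXr4 : ((XI n a4 b4 : ℤ):ℝ) = 2*D*x p4 := by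
    simp only [XI]; push_cast; rw [← hDn]; linear_combination hax4 - hbx4
  have hSr2 : ((SI n a2 b2 : ℤ):ℝ) = 4*D^2*(y p2)^2 := by
    simp only [SI]; push_cast; rw [hXr2, ← hDn]; linear_combination 4*D^2*hax2
  have hSr3 : ((SI n a3 b3 : ℤ):ℝ) = 4*D^2*(y p3)^2 := by
    simp only [SI]; push_cast; rw [hXr3, ← hDn]; linear_combination 4*D^2*hax3
  have hSr4 : ((SI n a4 b4 : ℤ):ℝ) = 4*D^2*(y p4)^2 := by
    simp only [SI]; push_cast; rw [hXr4, ← hDn]; linear_combination 4*D^2*hax4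
  have hAr3 : ((AI n a2 b2 a3 b3 c23 : ℤ):ℝ) = 8*D^2*(y p2)*(y p3) := by
    simp only [AI]; push_cast; rw [hSr2, hSr3, hXr2, hXr3, ← hDn]
    linear_combination (-4)*D^2*hcx23
  have hAr4 : ((AI n a2 b2 a4 b4 c24 : ℤ):ℝ) = 8*D^2*(y p2)*(y p4) := by
    simp only [AI]; push_cast; rw [hSr2, hSr4, hXr2, hXr4, ← hDn]
    linear_combination (-4)*D^2*hcx24
  -- integer facts
  have hS2pos : 0 < SI n a2 b2 := by
    have h : (0:ℝ) < ((SI n a2 b2 : ℤ):ℝ) := by rw [hSr2]; positivity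
    exact_mod_cast h
  have hS3nn : 0 ≤ SI n a3 b3 := by
    have h : (0:ℝ) ≤ ((SI n a3 b3 : ℤ):ℝ) := by rw [hSr3]; positivity
    exact_mod_cast h
  have hS4nn : 0 ≤ SI n a4 b4 := by
    have h : (0:ℝ) ≤ ((SI n a4 b4 : ℤ):ℝ) := by rw [hSr4]; positivity
    exact_mod_cast h
  have e3 : AI n a2 b2 a3 b3 c23 * AI n a2 b2 a3 b3 c23 = 4 * SI n a2 b2 * SI n a3 b3 := by
    have h : ((AI n a2 b2 a3 b3 c23 * AI n a2 b2 a3 b3 c23 : ℤ):ℝ)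
        = ((4 * SI n a2 b2 * SI n a3 b3 : ℤ):ℝ) := by
      push_cast
      rw [hAr3, hSr2, hSr3]; ring
    exact_mod_cast h
  have e4 : AI n a2 b2 a4 b4 c24 * AI n a2 b2 a4 b4 c24 = 4 * SI n a2 b2 * SI n a4 b4 := by
    have h : ((AI n a2 b2 a4 b4 c24 * AI n a2 b2 a4 b4 c24 : ℤ):ℝ)
        = ((4 * SI n a2 b2 * SI n a4 b4 : ℤ):ℝ) := by
      push_cast
      rw [hAr4, hSr2, hSr4]; ring
    exact_mod_cast h
  have e34 : 2 * SI n a2 b2 *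
      ((XI n a3 b3 - XI n a4 b4)*(XI n a3 b3 - XI n a4 b4)
        + SI n a3 b3 + SI n a4 b4 - 4*(n:ℤ)*(n:ℤ)*(c34:ℤ)*(c34:ℤ))
      = AI n a2 b2 a3 b3 c23 * AI n a2 b2 a4 b4 c24 := by
    have h : ((2 * SI n a2 b2 *
        ((XI n a3 b3 - XI n a4 b4)*(XI n a3 b3 - XI n a4 b4)
          + SI n a3 b3 + SI n a4 b4 - 4*(n:ℤ)*(n:ℤ)*(c34:ℤ)*(c34:ℤ)) : ℤ):ℝ)
        = ((AI n a2 b2 a3 b3 c23 * AI n a2 b2 a4 b4 c24 : ℤ):ℝ) := by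
      simp only [Int.cast_mul, Int.cast_add, Int.cast_sub, Int.cast_natCast, Int.cast_ofNat]
      rw [hAr3, hAr4, hSr2, hSr3, hSr4, hXr3, hXr4, ← hDn]
      linear_combination (-32*D^4*(y p2)^2) * hcx34
    exact_mod_cast h
  exact nosol' n a2 b2 a3 b3 a4 b4 c23 c24 c34 hn1 hn6 ha21 ha26 hb21 hb26 ha31 ha36 hb31 hb36
    ha41 ha46 hb41 hb46 hc231 hc236 hc241 hc246 hc341 hc346 hS2pos hS3nn hS4nn e3 e4 e34


/-- The minimum diameter of a 5-point plane integral point set is `7`: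
there exist 5 non-collinear points with pairwise integral distances and largest
distance `7`, and no such configuration has all pairwise distances at most `6`. -/
theorem min_diameter_five_points :
    (∃ S : Finset (EuclideanSpace ℝ (Fin 2)), S.card = 5 ∧
      (∀ p ∈ S, ∀ q ∈ S, ∃ m : ℕ, dist p q = m) ∧
      ¬ Collinear ℝ (S : Set (EuclideanSpace ℝ (Fin 2))) ∧
      (∀ p ∈ S, ∀ q ∈ S, dist p q ≤ 7) ∧
      (∃ p ∈ S, ∃ q ∈ S, dist p q = 7)) ∧
    ¬ (∃ S : Finset (EuclideanSpace ℝ (Fin 2)), S.card = 5 ∧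
      (∀ p ∈ S, ∀ q ∈ S, ∃ m : ℕ, dist p q = m) ∧
      ¬ Collinear ℝ (S : Set (EuclideanSpace ℝ (Fin 2))) ∧
      (∀ p ∈ S, ∀ q ∈ S, dist p q ≤ 6)) := by
  exact ⟨part1, part2⟩
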